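/- Let m ≥ 0. The set of matrices S ∈ M_{(m+2)×2}(K) such that there exist Q, R ∈ K^{m+1} with S·Y^1_2 = Y^{m+1}_{m+2} Q and S·Z^1_2 = Z^{m+1}_{m+2} R equals { S : S_{1,2} = 0 and S_{1,1} + S_{1,2} = Σ_{i=2}^{m+2} ε_i (S_{i,1} + S_{i,2}) }, where ε_i = +1 if i ≡ 2 or 3 (mod 4) and ε_i = −1 if i ≡ 0 or 1 (mod 4). In particular this set is a (2m+2)-dimensional subspace of M_{(m+2)×2}(K). -/

import Mathlib

/-- `Y^n_{n+i}`: the `(n+i) × n` matrix whose top `i` rows are zero and whose bottom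
`n` rows form the identity. -/
def Ymat (K : Type*) [Field K] (n i : ℕ) : Matrix (Fin (n + i)) (Fin n) K :=
  Matrix.of fun r c => if (r : ℕ) = (c : ℕ) + i then 1 else 0

/-- The matrix `Z^{m+1}_{m+2}`, determined by `(Zr)_1 = r_1 + r_2` and
`(Zr)_i = r_{i-1} + r_{i+1}` for `2 ≤ i ≤ m+2` (1-based, `r_j = 0` for `j > m+1`). -/
def Zmat2 (K : Type*) [Field K] (m : ℕ) : Matrix (Fin (m + 2)) (Fin (m + 1)) K :=
  Matrix.of fun r c =>
    if (r : ℕ) = 0 then (if (c : ℕ) = 0 ∨ (c : ℕ) = 1 then 1 else 0)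
    else (if (c : ℕ) + 1 = (r : ℕ) ∨ (c : ℕ) = (r : ℕ) + 1 then 1 else 0)

/-- `ε_i = +1` if `i ≡ 2, 3 (mod 4)` and `ε_i = -1` if `i ≡ 0, 1 (mod 4)`. -/
def eps4 (K : Type*) [Field K] (i : ℕ) : K :=
  if i % 4 = 2 ∨ i % 4 = 3 then 1 else -1

/-- `Σ_{i=2}^{m+2} ε_i (S_{i,1} + S_{i,2})` (1-based row indices). -/
def rowSum (K : Type*) [Field K] (m : ℕ) (S : Matrix (Fin (m + 2)) (Fin 2) K) : K :=
  ∑ i : Fin (m + 2), (if (i : ℕ) = 0 then 0 else eps4 K ((i : ℕ) + 1)) * (S i 0 + S i 1)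

/-- `S·Y^1_2 = Y^{m+1}_{m+2} Q` and `S·Z^1_2 = Z^{m+1}_{m+2} R` for some `Q, R ∈ K^{m+1}`. -/
def cond5 (K : Type*) [Field K] (m : ℕ) (S : Matrix (Fin (m + 2)) (Fin 2) K) : Prop :=
  ∃ Q R : Fin (m + 1) → K,
    S.mulVec ![0, 1] = (Ymat K (m + 1) 1).mulVec Q ∧
    S.mulVec ![1, 1] = (Zmat2 K m).mulVec R

/- ======================= auxiliary material ======================= -/

/-- Extension of a vector on `Fin n` to `ℕ` by zero. -/
def Rext {K : Type*} [Field K] {n : ℕ} (R : Fin n → K) (k : ℕ) : K :=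
  if h : k < n then R ⟨k, h⟩ else 0

/-- The functional coefficients annihilating the range of `Zmat2`. -/
def alphaf (K : Type*) [Field K] (m : ℕ) : Fin (m + 2) → K :=
  fun r => if (r : ℕ) % 4 = 0 ∨ (r : ℕ) % 4 = 3 then 1 else -1

lemma sum_delta {K : Type*} [Field K] {n : ℕ} (v : Fin n → K) (k : ℕ) :
    ∑ c : Fin n, (if (c : ℕ) = k then (1:K) else 0) * v c = Rext v k := by
  unfold Rext
  split_ifs with h
  · rw [Finset.sum_eq_single (⟨k, h⟩ : Fin n)]
    · simp
    · intro b _ hb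
      rw [if_neg (by simpa [Fin.ext_iff] using hb), zero_mul]
    · simp
  · apply Finset.sum_eq_zero; intro c _
    have := c.isLt
    rw [if_neg (by omega), zero_mul]

lemma Zmat2_row {K : Type*} [Field K] (m : ℕ) (r : Fin (m+2)) (c : Fin (m+1)) :
    Zmat2 K m r c = (if (r : ℕ) = (c : ℕ) - 1 then 1 else 0)
      + (if (r : ℕ) = (c : ℕ) + 1 then (1:K) else 0) := by
  unfold Zmat2
  simp only [Matrix.of_apply]
  split_ifs <;> norm_num <;> omega

lemma Zmat2_mulVec {K : Type*} [Field K] (m : ℕ) (R : Fin (m+1) → K) (r : Fin (m+2)) :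
    (Zmat2 K m).mulVec R r = Rext R ((r : ℕ) - 1) + Rext R ((r : ℕ) + 1) := by
  rw [Matrix.mulVec]
  show ∑ c, Zmat2 K m r c * R c = _
  rcases Nat.eq_zero_or_pos (r : ℕ) with h0 | h0
  · have : ∀ c : Fin (m+1), Zmat2 K m r c * R c =
        (if (c : ℕ) = 0 then (1:K) else 0) * R c + (if (c : ℕ) = 1 then (1:K) else 0) * R c := by
      intro c
      rw [← add_mul]
      congr 1
      unfold Zmat2
      simp only [Matrix.of_apply, if_pos h0]
      split_ifs <;> norm_num <;> omega
    rw [Finset.sum_congr rfl fun c _ => this c, Finset.sum_add_distrib, sum_delta, sum_delta, h0]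
  · have : ∀ c : Fin (m+1), Zmat2 K m r c * R c =
        (if (c : ℕ) = (r : ℕ) + 1 then (1:K) else 0) * R c
          + (if (c : ℕ) = (r : ℕ) - 1 then (1:K) else 0) * R c := by
      intro c
      rw [Zmat2_row, add_mul]
      congr 1 <;> (congr 1) <;> (apply if_congr _ rfl rfl; omega)
    rw [Finset.sum_congr rfl fun c _ => this c, Finset.sum_add_distrib, sum_delta, sum_delta,
      add_comm]

lemma Ymat_mulVec {K : Type*} [Field K] (m : ℕ) (Q : Fin (m+1) → K) (r : Fin (m+2)) :
    (Ymat K (m+1) 1).mulVec Q r = if (r : ℕ) = 0 then 0 else Rext Q ((r : ℕ) - 1) := by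
  rw [Matrix.mulVec]
  show ∑ c, Ymat K (m+1) 1 r c * Q c = _
  split_ifs with h0
  · apply Finset.sum_eq_zero; intro c _
    unfold Ymat
    simp only [Matrix.of_apply]
    rw [if_neg (by omega), zero_mul]
  · have : ∀ c : Fin (m+1), Ymat K (m+1) 1 r c * Q c =
        (if (c : ℕ) = (r : ℕ) - 1 then (1:K) else 0) * Q c := by
      intro c
      unfold Ymat
      simp only [Matrix.of_apply]
      congr 1
      apply if_congr _ rfl rfl; omega
    rw [Finset.sum_congr rfl fun c _ => this c, sum_delta]

lemma alpha_dot {K : Type*} [Field K] (m : ℕ) (R : Fin (m+1) → K) :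
    ∑ r : Fin (m+2), alphaf K m r * (Zmat2 K m).mulVec R r = 0 := by
  have h1 : ∀ r : Fin (m+2), alphaf K m r * (Zmat2 K m).mulVec R r
      = ∑ c : Fin (m+1), (alphaf K m r * Zmat2 K m r c) * R c := by
    intro r
    rw [Matrix.mulVec]
    show _ * ∑ c, Zmat2 K m r c * R c = _
    rw [Finset.mul_sum]
    simp [mul_assoc]
  rw [Finset.sum_congr rfl fun r _ => h1 r, Finset.sum_comm]
  apply Finset.sum_eq_zero; intro c _
  rw [← Finset.sum_mul]
  have h2 : ∑ r : Fin (m+2), alphaf K m r * Zmat2 K m r c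
      = Rext (alphaf K m) ((c:ℕ)-1) + Rext (alphaf K m) ((c:ℕ)+1) := by
    have h3 : ∀ r : Fin (m+2), alphaf K m r * Zmat2 K m r c =
        (if (r:ℕ) = (c:ℕ)-1 then (1:K) else 0) * alphaf K m r
        + (if (r:ℕ) = (c:ℕ)+1 then (1:K) else 0) * alphaf K m r := by
      intro r; rw [Zmat2_row]; ring
    rw [Finset.sum_congr rfl fun r _ => h3 r, Finset.sum_add_distrib, sum_delta, sum_delta]
  rw [h2]
  have hc1 : (c:ℕ) - 1 < m + 2 := by omega
  have hc2 : (c:ℕ) + 1 < m + 2 := by have := c.isLt; omega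
  rw [Rext, dif_pos hc1, Rext, dif_pos hc2]
  unfold alphaf
  simp only [Fin.val_mk]
  rw [show (0:K) = (0:K) * R c by ring]
  congr 1
  split_ifs <;> first | ring1 | (exfalso; omega)

lemma Z_inj {K : Type*} [Field K] (m : ℕ) (R : Fin (m+1) → K)
    (h : (Zmat2 K m).mulVec R = 0) : R = 0 := by
  have key : ∀ t k, m + 2 ≤ k + t → Rext R k = 0 := by
    intro t
    induction t using Nat.strong_induction_on with
    | _ t ih =>
      intro k hk
      by_cases hkm : k < m + 1
      · have ht : 2 ≤ t := by omega
        have hrow : (Zmat2 K m).mulVec R ⟨k+1, by omega⟩ = 0 := congrFun h _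
        rw [Zmat2_mulVec] at hrow
        simp only [Fin.val_mk] at hrow
        have hk2 : Rext R (k+2) = 0 := ih (t-2) (by omega) (k+2) (by omega)
        have hkk : k + 1 - 1 = k := by omega
        rw [hkk, hk2, add_zero] at hrow
        exact hrow
      · rw [Rext, dif_neg hkm]
  funext j
  have hj := key (m+2) j (by omega)
  rw [Rext, dif_pos j.isLt] at hj
  simpa using hj

/-- The functional `v ↦ Σ α_r v_r`. -/
def phiL (K : Type*) [Field K] (m : ℕ) : (Fin (m+2) → K) →ₗ[K] K where
  toFun v := ∑ r, alphaf K m r * v r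
  map_add' u v := by
    simp only [Pi.add_apply, mul_add]
    rw [Finset.sum_add_distrib]
  map_smul' a v := by
    simp only [Pi.smul_apply, smul_eq_mul, RingHom.id_apply, Finset.mul_sum]
    exact Finset.sum_congr rfl fun r _ => by ring

lemma alpha_sum {K : Type*} [Field K] (m : ℕ) (v : Fin (m+2) → K) :
    ∑ r : Fin (m+2), alphaf K m r * v r
      = v 0 - ∑ r : Fin (m+2), (if (r:ℕ) = 0 then 0 else eps4 K ((r:ℕ)+1)) * v r := by
  rw [eq_sub_iff_add_eq, ← Finset.sum_add_distrib]
  have h1 : ∀ r : Fin (m+2),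
      alphaf K m r * v r + (if (r:ℕ) = 0 then 0 else eps4 K ((r:ℕ)+1)) * v r
        = (if (r:ℕ) = 0 then (1:K) else 0) * v r := by
    intro r
    rw [← add_mul]
    congr 1
    unfold alphaf eps4
    split_ifs <;> first | ring1 | (exfalso; omega)
  rw [Finset.sum_congr rfl fun r _ => h1 r, sum_delta, Rext, dif_pos (by omega : 0 < m + 2)]
  rfl

lemma mulVec01 {K : Type*} [Field K] (m : ℕ) (S : Matrix (Fin (m + 2)) (Fin 2) K)
    (r : Fin (m+2)) : S.mulVec ![0, 1] r = S r 1 := by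
  rw [Matrix.mulVec]
  show ∑ c, S r c * ![(0:K), 1] c = _
  rw [Fin.sum_univ_two]
  simp

lemma mulVec11 {K : Type*} [Field K] (m : ℕ) (S : Matrix (Fin (m + 2)) (Fin 2) K)
    (r : Fin (m+2)) : S.mulVec ![1, 1] r = S r 0 + S r 1 := by
  rw [Matrix.mulVec]
  show ∑ c, S r c * ![(1:K), 1] c = _
  rw [Fin.sum_univ_two]
  simp

lemma rowSum_add {K : Type*} [Field K] (m : ℕ) (S T : Matrix (Fin (m + 2)) (Fin 2) K) :
    rowSum K m (S + T) = rowSum K m S + rowSum K m T := by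
  unfold rowSum
  rw [← Finset.sum_add_distrib]
  refine Finset.sum_congr rfl fun i _ => ?_
  simp only [Matrix.add_apply]
  ring

lemma rowSum_smul {K : Type*} [Field K] (m : ℕ) (a : K) (S : Matrix (Fin (m + 2)) (Fin 2) K) :
    rowSum K m (a • S) = a * rowSum K m S := by
  unfold rowSum
  rw [Finset.mul_sum]
  refine Finset.sum_congr rfl fun i _ => ?_
  simp only [Matrix.smul_apply, smul_eq_mul]
  ring

/-- The linear map cutting out the solution space. -/
def fL (K : Type*) [Field K] (m : ℕ) : Matrix (Fin (m + 2)) (Fin 2) K →ₗ[K] K × K where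
  toFun S := (S 0 1, S 0 0 + S 0 1 - rowSum K m S)
  map_add' S T := by
    simp only [Matrix.add_apply, rowSum_add, Prod.mk_add_mk, Prod.mk.injEq]
    exact ⟨trivial, by ring⟩
  map_smul' a S := by
    simp only [Matrix.smul_apply, smul_eq_mul, rowSum_smul, RingHom.id_apply, Prod.smul_mk,
      Prod.mk.injEq]
    exact ⟨trivial, by ring⟩

theorem stmt5 (K : Type*) [Field K] (m : ℕ) :
    (∀ S : Matrix (Fin (m + 2)) (Fin 2) K,
      cond5 K m S ↔ (S 0 1 = 0 ∧ S 0 0 + S 0 1 = rowSum K m S)) ∧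
    ∃ W : Submodule K (Matrix (Fin (m + 2)) (Fin 2) K),
      (∀ S, S ∈ W ↔ cond5 K m S) ∧ Module.finrank K W = 2 * m + 2 := by
  have main : ∀ S : Matrix (Fin (m + 2)) (Fin 2) K,
      cond5 K m S ↔ (S 0 1 = 0 ∧ S 0 0 + S 0 1 = rowSum K m S) := by
    intro S
    constructor
    · rintro ⟨Q, R, hQ, hR⟩
      have h01 : S 0 1 = 0 := by
        have h := congrFun hQ 0
        rw [mulVec01, Ymat_mulVec] at h
        simpa using h
      refine ⟨h01, ?_⟩
      have h0 : ∑ r : Fin (m+2), alphaf K m r * S.mulVec ![1,1] r = 0 := by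
        rw [hR]; exact alpha_dot m R
      rw [alpha_sum] at h0
      have e2 : ∑ r : Fin (m+2), (if (r:ℕ) = 0 then 0 else eps4 K ((r:ℕ)+1)) * S.mulVec ![1,1] r
          = rowSum K m S := by
        unfold rowSum
        exact Finset.sum_congr rfl fun r _ => by rw [mulVec11]
      rw [e2, mulVec11] at h0
      exact sub_eq_zero.mp h0
    · rintro ⟨h1, h2⟩
      -- construct R via the range = kernel argument
      have hinj : Function.Injective (Matrix.mulVecLin (Zmat2 K m)) := by
        rw [← LinearMap.ker_eq_bot, LinearMap.ker_eq_bot']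
        intro R hR
        exact Z_inj m R hR
      have hle : LinearMap.range (Matrix.mulVecLin (Zmat2 K m)) ≤ LinearMap.ker (phiL K m) := by
        rintro _ ⟨R, rfl⟩
        show ∑ r, alphaf K m r * (Zmat2 K m).mulVec R r = 0
        exact alpha_dot m R
      have hsurj : Function.Surjective (phiL K m) := by
        intro a
        refine ⟨fun r => if r = 0 then a else 0, ?_⟩
        show ∑ r : Fin (m+2), alphaf K m r * (if r = 0 then a else 0) = a
        rw [Finset.sum_eq_single (0 : Fin (m+2))]
        · simp [alphaf]
        · intro b _ hb; simp [hb]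
        · simp
      have hker : Module.finrank K (LinearMap.ker (phiL K m)) = m + 1 := by
        have h := LinearMap.finrank_range_add_finrank_ker (phiL K m)
        rw [LinearMap.range_eq_top.mpr hsurj] at h
        simp only [finrank_top, Module.finrank_self, Module.finrank_pi, Fintype.card_fin] at h
        omega
      have hrge : Module.finrank K (LinearMap.range (Matrix.mulVecLin (Zmat2 K m))) = m + 1 := by
        rw [LinearMap.finrank_range_of_inj hinj]
        simp
      have heq : LinearMap.range (Matrix.mulVecLin (Zmat2 K m)) = LinearMap.ker (phiL K m) :=
        Submodule.eq_of_le_of_finrank_le hle (by rw [hker, hrge])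
      have hmem : S.mulVec ![1,1] ∈ LinearMap.ker (phiL K m) := by
        show ∑ r, alphaf K m r * S.mulVec ![1,1] r = 0
        rw [alpha_sum]
        have e2 : ∑ r : Fin (m+2), (if (r:ℕ) = 0 then 0 else eps4 K ((r:ℕ)+1)) * S.mulVec ![1,1] r
            = rowSum K m S := by
          unfold rowSum
          exact Finset.sum_congr rfl fun r _ => by rw [mulVec11]
        rw [e2, mulVec11]
        rw [h2]
        ring
      rw [← heq] at hmem
      obtain ⟨R, hRs⟩ := hmem
      refine ⟨fun j => S j.succ 1, R, ?_, hRs.symm⟩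
      funext r
      rw [mulVec01, Ymat_mulVec]
      split_ifs with hr
      · have : r = 0 := by ext; exact hr
        rw [this, h1]
      · rw [Rext, dif_pos (by have := r.isLt; omega : (r:ℕ) - 1 < m + 1)]
        have hsr : (⟨(r:ℕ) - 1, by have := r.isLt; omega⟩ : Fin (m+1)).succ = r := by
          ext
          simp only [Fin.val_succ]
          omega
        conv_lhs => rw [← hsr]
    -- end main
  refine ⟨main, LinearMap.ker (fL K m), ?_, ?_⟩
  · intro S
    rw [main S, LinearMap.mem_ker]
    show (S 0 1, S 0 0 + S 0 1 - rowSum K m S) = (0, 0) ↔ _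
    rw [Prod.mk.injEq, sub_eq_zero]
  · have hsurj : Function.Surjective (fL K m) := by
      rintro ⟨a, b⟩
      refine ⟨Matrix.of fun i j => if i = 0 then (if j = 0 then b - a else a) else 0, ?_⟩
      have hrs : rowSum K m (Matrix.of fun (i : Fin (m+2)) (j : Fin 2) =>
          if i = 0 then (if j = 0 then b - a else a) else 0) = 0 := by
        unfold rowSum
        apply Finset.sum_eq_zero
        intro i _
        by_cases hi : (i:ℕ) = 0
        · rw [if_pos hi, zero_mul]
        · have : i ≠ 0 := by simp [Fin.ext_iff, hi]
          simp [this]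
      show ((_ : K), (_ : K)) = (a, b)
      rw [hrs]
      norm_num
    have h := LinearMap.finrank_range_add_finrank_ker (fL K m)
    rw [LinearMap.range_eq_top.mpr hsurj] at h
    simp only [finrank_top, Module.finrank_self, Module.finrank_matrix, Fintype.card_fin,
      Module.finrank_prod] at h
    omega
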